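/- Let W = span{I₂, J₂} ⊆ L(ℝ², ℝ²) with J₂ = [[0,−1],[1,0]]. For every k ≥ 0, dim M_k(W) = 2. -/

import Mathlib

open Function

noncomputable section

variable {E F : Type*} [AddCommGroup E] [Module ℝ E] [AddCommGroup F] [Module ℝ F]

def Mk (k : ℕ) (V : Submodule ℝ (E →ₗ[ℝ] F)) :
    Submodule ℝ (MultilinearMap ℝ (fun _ : Fin k => E) F) where
  carrier := {T | (∀ (σ : Equiv.Perm (Fin k)) (x : Fin k → E), T (x ∘ σ) = T x) ∧
    ∀ (x : Fin k → E) (i : Fin k), T.toLinearMap x i ∈ V}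
  add_mem' := by
    rintro T S ⟨hT1, hT2⟩ ⟨hS1, hS2⟩
    refine ⟨fun σ x => by simp [hT1 σ x, hS1 σ x], fun x i => ?_⟩
    have h : (T + S).toLinearMap x i = T.toLinearMap x i + S.toLinearMap x i := by
      ext z; simp
    rw [h]; exact V.add_mem (hT2 x i) (hS2 x i)
  zero_mem' := by
    refine ⟨fun σ x => rfl, fun x i => ?_⟩
    have h : (0 : MultilinearMap ℝ (fun _ : Fin k => E) F).toLinearMap x i = 0 := by
      ext z; simp
    rw [h]; exact V.zero_mem
  smul_mem' := by
    rintro c T ⟨hT1, hT2⟩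
    refine ⟨fun σ x => by simp [hT1 σ x], fun x i => ?_⟩
    have h : (c • T).toLinearMap x i = c • T.toLinearMap x i := by
      ext z; simp
    rw [h]; exact V.smul_mem c (hT2 x i)

end

noncomputable def phiC : ℂ ≃ₗ[ℝ] (Fin 2 → ℝ) := Complex.basisOneI.equivFun

lemma phiC_apply (z : ℂ) : phiC z = ![z.re, z.im] := by
  simp [phiC, Module.Basis.equivFun_apply, Complex.coe_basisOneI_repr]

lemma phiC_symm_apply (v : Fin 2 → ℝ) : phiC.symm v = ⟨v 0, v 1⟩ := by
  have : phiC.symm v = v 0 + v 1 * Complex.I := by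
    simp [phiC, Module.Basis.equivFun_symm_apply, Fin.sum_univ_two, Complex.basisOneI]
  rw [this]; apply Complex.ext <;> simp

noncomputable def Tc (k : ℕ) (c : ℂ) :
    MultilinearMap ℝ (fun _ : Fin k => (Fin 2 → ℝ)) (Fin 2 → ℝ) :=
  phiC.toLinearMap.compMultilinearMap
    ((c • MultilinearMap.mkPiAlgebraFin ℝ k ℂ).compLinearMap fun _ => phiC.symm.toLinearMap)

lemma Tc_apply (k : ℕ) (c : ℂ) (x : Fin k → (Fin 2 → ℝ)) :
    Tc k c x = phiC (c * ∏ i, phiC.symm (x i)) := by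
  simp [Tc, List.prod_ofFn]

lemma mul_eq_comb (J₂ : (Fin 2 → ℝ) →ₗ[ℝ] (Fin 2 → ℝ))
    (hJ : J₂ = Matrix.toLin' !![(0 : ℝ), -1; 1, 0]) (w : ℂ) (z : Fin 2 → ℝ) :
    phiC (w * phiC.symm z)
      = (w.re • (LinearMap.id : (Fin 2 → ℝ) →ₗ[ℝ] (Fin 2 → ℝ)) + w.im • J₂) z := by
  subst hJ
  rw [phiC_symm_apply, phiC_apply]
  ext j
  fin_cases j <;>
    simp [Matrix.toLin'_apply, Matrix.mulVec, dotProduct, Fin.sum_univ_two] <;>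
    ring

lemma Tc_mem (k : ℕ) (c : ℂ) (J₂ : (Fin 2 → ℝ) →ₗ[ℝ] (Fin 2 → ℝ))
    (hJ : J₂ = Matrix.toLin' !![(0 : ℝ), -1; 1, 0])
    (W : Submodule ℝ ((Fin 2 → ℝ) →ₗ[ℝ] (Fin 2 → ℝ)))
    (hW : W = Submodule.span ℝ {LinearMap.id, J₂}) :
    Tc k c ∈ Mk k W := by
  constructor
  · intro σ x
    rw [Tc_apply, Tc_apply]
    congr 2
    exact Equiv.prod_comp σ fun i => phiC.symm (x i)
  · intro x i
    set w : ℂ := c * ∏ j ∈ Finset.univ \ {i}, phiC.symm (x j) with hw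
    have key : (Tc k c).toLinearMap x i
        = w.re • (LinearMap.id : (Fin 2 → ℝ) →ₗ[ℝ] (Fin 2 → ℝ)) + w.im • J₂ := by
      refine LinearMap.ext fun z => ?_
      have h1 : (Tc k c).toLinearMap x i z = Tc k c (update x i z) := rfl
      rw [h1, Tc_apply]
      have h2 : (fun j => phiC.symm (update x i z j))
          = update (fun j => phiC.symm (x j)) i (phiC.symm z) := by
        funext j
        exact apply_update (fun _ v => phiC.symm v) x i z j
      rw [h2, Finset.prod_update_of_mem (Finset.mem_univ i)]
      have h3 : c * (phiC.symm z * ∏ j ∈ Finset.univ \ {i}, phiC.symm (x j))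
          = w * phiC.symm z := by rw [hw]; ring
      rw [h3, mul_eq_comb J₂ hJ]
    rw [key, hW]
    exact Submodule.add_mem _
      (Submodule.smul_mem _ _ (Submodule.subset_span (Set.mem_insert _ _)))
      (Submodule.smul_mem _ _ (Submodule.subset_span (Set.mem_insert_iff.2 (Or.inr rfl))))

theorem finrank_Mk_complex_span
    (J₂ : (Fin 2 → ℝ) →ₗ[ℝ] (Fin 2 → ℝ))
    (hJ : J₂ = Matrix.toLin' !![(0 : ℝ), -1; 1, 0])
    (W : Submodule ℝ ((Fin 2 → ℝ) →ₗ[ℝ] (Fin 2 → ℝ)))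
    (hW : W = Submodule.span ℝ {LinearMap.id, J₂}) (k : ℕ) :
    Module.finrank ℝ (Mk k W) = 2 := by
  classical
  -- evaluation map
  let Φ : Mk k W →ₗ[ℝ] (Fin 2 → ℝ) :=
    { toFun := fun T => (T : MultilinearMap ℝ (fun _ : Fin k => (Fin 2 → ℝ)) (Fin 2 → ℝ))
        (fun _ => ![1, 0])
      map_add' := by intro T S; rfl
      map_smul' := by intro c T; rfl }
  have hJe : J₂ ![1, 0] = ![0, 1] := by
    subst hJ
    ext j
    fin_cases j <;>
      simp [Matrix.toLin'_apply, Matrix.mulVec, dotProduct, Fin.sum_univ_two]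
  have hinj : Function.Injective Φ := by
    rw [injective_iff_map_eq_zero]
    rintro ⟨T, hT1, hT2⟩ h0
    have h0' : T (fun _ => ![1, 0]) = 0 := h0
    have key : ∀ m : ℕ, ∀ x : Fin k → (Fin 2 → ℝ),
        (∀ i : Fin k, m ≤ i.1 → x i = ![1, 0]) → T x = 0 := by
      intro m
      induction m with
      | zero =>
        intro x hx
        have : x = fun _ => ![1, 0] := funext fun i => hx i (Nat.zero_le _)
        rw [this]; exact h0'
      | succ m ih =>
        intro x hx
        by_cases hm : m < k
        · set i : Fin k := ⟨m, hm⟩ with hi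
          have hL : T.toLinearMap x i ∈ W := hT2 x i
          rw [hW] at hL
          obtain ⟨a, b, hab⟩ := Submodule.mem_span_pair.1 hL
          have h1 : T (update x i ![1, 0]) = 0 := by
            refine ih _ fun j hj => ?_
            rcases eq_or_ne j i with h | h
            · rw [h, update_self]
            · rw [update_of_ne h]
              refine hx j ?_
              have : j.1 ≠ m := fun hc => h (Fin.ext hc)
              omega
          have h2 : (a • (LinearMap.id : (Fin 2 → ℝ) →ₗ[ℝ] (Fin 2 → ℝ)) + b • J₂) ![1, 0]
              = T (update x i ![1, 0]) := by rw [hab]; rfl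
          rw [h1] at h2
          have ha : a = 0 := by
            have := congrFun h2 0
            simpa [hJe] using this
          have hb : b = 0 := by
            have := congrFun h2 1
            simpa [hJe] using this
          have hL0 : T.toLinearMap x i = 0 := by
            rw [← hab, ha, hb]; simp
          have : T x = T.toLinearMap x i (x i) := by
            have : update x i (x i) = x := update_eq_self i x
            simp [MultilinearMap.toLinearMap, this]
          rw [this, hL0]; rfl
        · refine ih x fun j hj => ?_
          exact absurd hj (by have := j.2; omega)
    apply Subtype.ext
    apply MultilinearMap.ext
    intro x
    exact key k x fun i hi => absurd i.2 (by omega)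
  have hsurj : Function.Surjective Φ := by
    intro v
    refine ⟨⟨Tc k (phiC.symm v), Tc_mem k _ J₂ hJ W hW⟩, ?_⟩
    show Tc k (phiC.symm v) (fun _ => ![1, 0]) = v
    rw [Tc_apply]
    have h1 : phiC.symm ![1, 0] = 1 := by
      rw [phiC_symm_apply]; apply Complex.ext <;> simp
    simp only [h1]
    simp
  have e : (Mk k W) ≃ₗ[ℝ] (Fin 2 → ℝ) := LinearEquiv.ofBijective Φ ⟨hinj, hsurj⟩
  rw [e.finrank_eq, Module.finrank_fin_fun]
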